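/- The sequence of Bell numbers B_n is not holonomic. -/

import Mathlib

open Finset

/-- A sequence is holonomic (P-recursive) if it satisfies a linear recurrence
with polynomial coefficients whose leading coefficient is not identically zero. -/
def HolonomicSeq (f : ℕ → ℂ) : Prop :=
  ∃ (d : ℕ) (p : ℕ → Polynomial ℂ), p 0 ≠ 0 ∧
    ∀ n : ℕ, ∑ j ∈ Finset.range (d + 1), (p j).eval (n : ℂ) * f (n + (d - j)) = 0

/-- The Bell numbers, counting set partitions, via the standard recurrence
`B_0 = 1`, `B_{n+1} = ∑_{k=0}^n C(n,k) B_k`. -/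
def bell : ℕ → ℕ
  | 0 => 1
  | n + 1 => ∑ k ∈ (Finset.range (n + 1)).attach, n.choose k.1 * bell k.1
  decreasing_by exact Finset.mem_range.mp k.2

open PowerSeries Polynomial

noncomputable def E : ℂ⟦X⟧ := PowerSeries.exp ℂ

theorem derivE : d⁄dX ℂ E = E := by
  ext n
  rw [PowerSeries.coeff_derivative, E, PowerSeries.coeff_exp, PowerSeries.coeff_exp]
  push_cast
  rw [Nat.factorial_succ]
  have h1 : ((n:ℂ)+1) ≠ 0 := Nat.cast_add_one_ne_zero n
  have h2 : ((n.factorial :ℂ)) ≠ 0 := by exact_mod_cast Nat.factorial_ne_zero n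
  push_cast
  field_simp

theorem derivE_pow (k : ℕ) : d⁄dX ℂ (E ^ k) = (k : ℂ) • E ^ k := by
  cases k with
  | zero => simp
  | succ j =>
    rw [Derivation.leibniz_pow, derivE, Nat.succ_sub_one, smul_eq_mul, ← pow_succ,
      Nat.cast_smul_eq_nsmul]

theorem coe_smul' (c : ℂ) (p : Polynomial ℂ) :
    ((c • p : Polynomial ℂ) : ℂ⟦X⟧) = c • (p : ℂ⟦X⟧) := by
  rw [Polynomial.smul_eq_C_mul, Polynomial.coe_mul, Polynomial.coe_C,
    PowerSeries.smul_eq_C_mul]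

theorem E_pow_ne_zero (k : ℕ) : E ^ k ≠ 0 := by
  apply pow_ne_zero
  intro h
  have := PowerSeries.constantCoeff_exp (A := ℂ)
  rw [← E, h] at this
  simp at this

/-- one derivative step for a polynomial–exponential relation -/
theorem deriv_rel (m : ℕ) (a : ℂ) (R : ℕ → Polynomial ℂ)
    (h : ∑ k ∈ range (m+1), (R k : ℂ⟦X⟧) * E ^ k = 0) :
    ∑ k ∈ range (m+1),
      ((derivative (R k) + ((k:ℂ) - a) • R k : Polynomial ℂ) : ℂ⟦X⟧) * E ^ k = 0 := by
  have hD := congrArg (d⁄dX ℂ) h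
  rw [map_sum, map_zero] at hD
  have key : ∑ k ∈ range (m+1),
      ((derivative (R k) + ((k:ℂ) - a) • R k : Polynomial ℂ) : ℂ⟦X⟧) * E ^ k
      = (∑ k ∈ range (m+1), d⁄dX ℂ ((R k : ℂ⟦X⟧) * E ^ k))
        - a • ∑ k ∈ range (m+1), (R k : ℂ⟦X⟧) * E ^ k := by
    rw [Finset.smul_sum, ← Finset.sum_sub_distrib]
    refine Finset.sum_congr rfl fun k _ => ?_
    rw [Derivation.leibniz, derivE_pow, PowerSeries.derivative_coe, Polynomial.coe_add,
      coe_smul']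
    simp only [smul_eq_mul, PowerSeries.smul_eq_C_mul, map_sub]
    ring
  rw [key, hD, h, smul_zero, sub_zero]

theorem deriv_eq_smul_self_zero (q : Polynomial ℂ) (a : ℂ) (ha : a ≠ 0)
    (h : derivative q = a • q) : q = 0 := by
  by_contra hq
  rcases eq_or_ne q.natDegree 0 with h0 | h0
  · have hd : derivative q = 0 := by
      rw [Polynomial.eq_C_of_natDegree_eq_zero h0]; simp
    rw [hd] at h
    exact hq ((smul_eq_zero.mp h.symm).resolve_left ha)
  · have hlt : (derivative q).natDegree < q.natDegree := Polynomial.natDegree_derivative_lt h0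
    rw [h, Polynomial.smul_eq_C_mul, Polynomial.natDegree_C_mul ha] at hlt
    exact lt_irrefl _ hlt

theorem indep : ∀ m (R : ℕ → Polynomial ℂ),
    (∑ k ∈ range (m+1), (R k : ℂ⟦X⟧) * E ^ k = 0) → ∀ k ≤ m, R k = 0 := by
  intro m
  induction m with
  | zero =>
    intro R h k hk
    interval_cases k
    rw [range_one, sum_singleton, pow_zero, mul_one] at h
    exact Polynomial.coe_eq_zero_iff.mp h
  | succ m ih =>
    have final : ∀ (R : ℕ → Polynomial ℂ),
        (∑ k ∈ range (m+2), (R k : ℂ⟦X⟧) * E ^ k = 0) →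
        (∀ k ≤ m, R k = 0) → ∀ k ≤ m+1, R k = 0 := by
      intro R h hlow k hk
      have hsum : ∑ k ∈ range (m+1), (R k : ℂ⟦X⟧) * E ^ k = 0 := by
        refine Finset.sum_eq_zero fun j hj => ?_
        rw [hlow j (Nat.lt_succ_iff.mp (mem_range.mp hj))]
        simp
      rw [show m + 2 = (m+1) + 1 from rfl, Finset.sum_range_succ, hsum, zero_add] at h
      have htop : R (m+1) = 0 := by
        rcases mul_eq_zero.mp h with h' | h'
        · exact Polynomial.coe_eq_zero_iff.mp h'
        · exact absurd h' (E_pow_ne_zero _)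
      rcases eq_or_lt_of_le hk with h' | h'
      · rw [h']; exact htop
      · exact hlow k (Nat.lt_succ_iff.mp h')
    suffices H : ∀ d (R : ℕ → Polynomial ℂ), (R (m+1)).natDegree ≤ d →
        (∑ k ∈ range (m+2), (R k : ℂ⟦X⟧) * E ^ k = 0) → ∀ k ≤ m+1, R k = 0 by
      intro R h k hk
      exact H (R (m+1)).natDegree R le_rfl h k hk
    intro d
    -- lower coefficients vanish once the T-relation coefficients vanish
    have lowzero : ∀ (R : ℕ → Polynomial ℂ), (∀ k ≤ m,
        derivative (R k) + ((k:ℂ) - ((m:ℂ)+1)) • R k = 0) → ∀ k ≤ m, R k = 0 := by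
      intro R hT k hk
      have ha : ((m:ℂ)+1) - (k:ℂ) ≠ 0 := by
        intro hc
        have : ((m:ℂ)+1) = (k:ℂ) := by linear_combination hc
        have : ((m+1:ℕ):ℂ) = ((k:ℕ):ℂ) := by push_cast; linear_combination this
        have := Nat.cast_injective (R := ℂ) this
        omega
      refine deriv_eq_smul_self_zero (R k) _ ha ?_
      have := hT k hk
      have h2 : derivative (R k) = -(((k:ℂ) - ((m:ℂ)+1)) • R k) := by
        linear_combination this
      rw [h2, ← neg_smul]
      congr 1
      ring
    induction d with
    | zero =>
      intro R hdeg h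
      have hT := deriv_rel (m+1) ((m:ℂ)+1) R h
      have hTtop : derivative (R (m+1)) + (((m+1:ℕ):ℂ) - ((m:ℂ)+1)) • R (m+1) = 0 := by
        have hd : derivative (R (m+1)) = 0 := by
          rw [Polynomial.eq_C_of_natDegree_eq_zero (Nat.le_zero.mp hdeg)]; simp
        rw [hd, zero_add, show ((m+1:ℕ):ℂ) - ((m:ℂ)+1) = 0 by push_cast; ring, zero_smul]
      have hT' : ∑ k ∈ range (m+1),
          ((derivative (R k) + ((k:ℂ) - ((m:ℂ)+1)) • R k : Polynomial ℂ) : ℂ⟦X⟧) * E ^ k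
          = 0 := by
        rw [show m + 1 + 1 = m + 2 from rfl, show m + 2 = (m+1)+1 from rfl,
          Finset.sum_range_succ] at hT
        rw [hTtop] at hT
        simpa using hT
      have hTlow := ih _ hT'
      exact final R h (lowzero R fun k hk => hTlow k hk)
    | succ d ihd =>
      intro R hdeg h
      have hT := deriv_rel (m+1) ((m:ℂ)+1) R h
      have hTdeg : (derivative (R (m+1)) + (((m+1:ℕ):ℂ) - ((m:ℂ)+1)) • R (m+1)).natDegree
          ≤ d := by
        rw [show ((m+1:ℕ):ℂ) - ((m:ℂ)+1) = 0 by push_cast; ring, zero_smul, add_zero]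
        exact le_trans (Polynomial.natDegree_derivative_le _) (by omega)
      have hTall := ihd (fun k => derivative (R k) + ((k:ℂ) - ((m:ℂ)+1)) • R k) hTdeg hT
      have hTlow : ∀ k ≤ m, derivative (R k) + ((k:ℂ) - ((m:ℂ)+1)) • R k = 0 :=
        fun k hk => hTall k (le_trans hk (Nat.le_succ m))
      exact final R h (lowzero R hTlow)


theorem bell_succ (n : ℕ) : bell (n+1) = ∑ k ∈ Finset.range (n+1), n.choose k * bell k := by
  rw [bell]
  exact Finset.sum_attach (Finset.range (n+1)) (fun k => (n.choose k * bell k : ℕ))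

noncomputable def bb (n : ℕ) : ℂ := (bell n : ℂ) / (n.factorial : ℂ)

noncomputable def bF : ℂ⟦X⟧ := PowerSeries.mk bb

theorem fact_ne (n : ℕ) : ((n.factorial : ℂ)) ≠ 0 := by
  exact_mod_cast Nat.factorial_ne_zero n

theorem derivbF : d⁄dX ℂ bF = E * bF := by
  ext n
  rw [PowerSeries.coeff_derivative, PowerSeries.coeff_mul,
    Finset.Nat.sum_antidiagonal_eq_sum_range_succ_mk]
  simp only [bF, E, PowerSeries.coeff_mk, PowerSeries.coeff_exp]
  have key : ∀ k ∈ Finset.range (n+1),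
      (algebraMap ℚ ℂ (1 / (k.factorial : ℚ))) * bb (n - k)
        = ((n.choose (n-k) * bell (n-k) : ℕ) : ℂ) / (n.factorial : ℂ) := by
    intro k hk
    have hkn : k ≤ n := Nat.lt_succ_iff.mp (Finset.mem_range.mp hk)
    have hfact : (n.choose (n-k)) * (n-k).factorial * (n - (n-k)).factorial = n.factorial :=
      Nat.choose_mul_factorial_mul_factorial (Nat.sub_le n k)
    rw [Nat.sub_sub_self hkn] at hfact
    rw [bb]
    rw [show (algebraMap ℚ ℂ (1 / (k.factorial : ℚ))) = 1 / (k.factorial : ℂ) by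
      push_cast; simp]
    rw [div_mul_div_comm, one_mul, eq_div_iff (fact_ne n), div_mul_eq_mul_div,
      div_eq_iff (by exact_mod_cast mul_ne_zero (fact_ne k) (fact_ne (n-k)))]
    push_cast [← hfact]
    ring
  rw [Finset.sum_congr rfl key, ← Finset.sum_div]
  rw [show ∑ k ∈ Finset.range (n+1), ((n.choose (n-k) * bell (n-k) : ℕ) : ℂ)
      = ∑ k ∈ Finset.range (n+1), ((n.choose k * bell k : ℕ) : ℂ) from
    Finset.sum_range_reflect (fun k => ((n.choose k * bell k : ℕ) : ℂ)) (n+1)]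
  rw [← Nat.cast_sum, ← bell_succ, bb]
  rw [Nat.factorial_succ]
  push_cast
  have h1 : ((n:ℂ)+1) ≠ 0 := Nat.cast_add_one_ne_zero n
  rw [div_mul_eq_mul_div, mul_comm, mul_div_mul_left _ _ h1]

theorem coeff_iter (i : ℕ) : ∀ n : ℕ, (PowerSeries.coeff (R := ℂ) n) ((d⁄dX ℂ)^[i] bF)
    = (∏ t ∈ Finset.range i, ((n:ℂ) + (i:ℂ) - (t:ℂ))) * bb (n + i) := by
  induction i with
  | zero => intro n; simp [bF]
  | succ i ih =>
    intro n
    rw [Function.iterate_succ_apply', PowerSeries.coeff_derivative, ih (n+1),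
      Finset.prod_range_succ]
    push_cast
    have : ∀ t : ℕ, ((n:ℂ)+1) + i - t = (n:ℂ) + (i+1) - t := by intro t; ring
    rw [show n + 1 + i = n + (i+1) by omega]
    rw [Finset.prod_congr rfl (fun t _ => this t)]
    ring

noncomputable def phi : ℕ → Polynomial ℂ
  | 0 => 1
  | i + 1 => Polynomial.X * (phi i + derivative (phi i))

theorem phi_monic_deg (i : ℕ) : (phi i).Monic ∧ (phi i).natDegree = i := by
  induction i with
  | zero => constructor <;> simp [phi, Polynomial.monic_one]
  | succ i ih =>
    obtain ⟨hm, hd⟩ := ih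
    have hne : phi i ≠ 0 := hm.ne_zero
    have hlt : (derivative (phi i)).degree < (phi i).degree :=
      Polynomial.degree_derivative_lt hne
    have hm2 : (phi i + derivative (phi i)).Monic := hm.add_of_left hlt
    have hd2 : (phi i + derivative (phi i)).natDegree = i := by
      rw [Polynomial.natDegree_eq_of_degree_eq (Polynomial.degree_add_eq_left_of_degree_lt hlt),
        hd]
    constructor
    · exact (Polynomial.monic_X).mul hm2
    · rw [phi, (Polynomial.monic_X).natDegree_mul hm2, Polynomial.natDegree_X, hd2]
      omega

theorem derivE_aeval (p : Polynomial ℂ) :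
    d⁄dX ℂ (Polynomial.aeval E p) = (Polynomial.aeval E (derivative p)) * E := by
  induction p using Polynomial.induction_on' with
  | add p q hp hq => rw [map_add, map_add, hp, hq, map_add, map_add, add_mul]
  | monomial n a =>
    rw [Polynomial.aeval_monomial, Polynomial.derivative_monomial]
    cases n with
    | zero => simp
    | succ n =>
      rw [Derivation.leibniz, derivE_pow, Derivation.map_algebraMap, smul_zero, add_zero,
        Polynomial.aeval_monomial, Nat.add_sub_cancel, smul_eq_mul,
        PowerSeries.smul_eq_C_mul, map_mul, pow_succ]
      simp only [PowerSeries.algebraMap_apply, Algebra.algebraMap_self_apply]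
      push_cast
      ring

theorem iter_deriv_bF (i : ℕ) : (d⁄dX ℂ)^[i] bF = (Polynomial.aeval E (phi i)) * bF := by
  induction i with
  | zero => simp [phi]
  | succ i ih =>
    rw [Function.iterate_succ_apply', ih, Derivation.leibniz, derivbF, derivE_aeval]
    rw [show phi (i+1) = Polynomial.X * (phi i + derivative (phi i)) from rfl]
    rw [map_mul, map_add, Polynomial.aeval_X]
    simp only [smul_eq_mul]
    ring

theorem bb_zero : bb 0 = 1 := by
  rw [bb, show bell 0 = 1 by rw [bell]]
  simp

theorem bF_ne_zero : bF ≠ 0 := by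
  intro h
  have : PowerSeries.coeff (R := ℂ) 0 bF = 0 := by rw [h]; simp
  rw [bF, PowerSeries.coeff_mk, bb_zero] at this
  exact one_ne_zero this

theorem no_ode (m : ℕ) (A : ℕ → Polynomial ℂ) (hA : A m ≠ 0)
    (h : ∑ i ∈ range (m+1), (A i : ℂ⟦X⟧) * (d⁄dX ℂ)^[i] bF = 0) : False := by
  have hS : (∑ i ∈ range (m+1), (A i : ℂ⟦X⟧) * Polynomial.aeval E (phi i)) * bF = 0 := by
    rw [Finset.sum_mul, ← h]
    exact Finset.sum_congr rfl fun i _ => by rw [iter_deriv_bF, mul_assoc]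
  have hS0 : ∑ i ∈ range (m+1), (A i : ℂ⟦X⟧) * Polynomial.aeval E (phi i) = 0 :=
    (mul_eq_zero.mp hS).resolve_right bF_ne_zero
  set R : ℕ → Polynomial ℂ := fun k => ∑ i ∈ range (m+1), (phi i).coeff k • A i with hR
  have hexp : ∑ k ∈ range (m+1), (R k : ℂ⟦X⟧) * E ^ k = 0 := by
    rw [← hS0]
    have : ∀ k, (R k : ℂ⟦X⟧) = ∑ i ∈ range (m+1), ((phi i).coeff k) • (A i : ℂ⟦X⟧) := by
      intro k
      rw [hR]
      rw [show ((∑ i ∈ range (m+1), (phi i).coeff k • A i : Polynomial ℂ) : ℂ⟦X⟧)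
        = Polynomial.coeToPowerSeries.ringHom (∑ i ∈ range (m+1), (phi i).coeff k • A i)
        from rfl, map_sum]
      exact Finset.sum_congr rfl fun i _ => coe_smul' _ _
    calc ∑ k ∈ range (m+1), (R k : ℂ⟦X⟧) * E ^ k
        = ∑ k ∈ range (m+1), ∑ i ∈ range (m+1),
            ((phi i).coeff k • (A i : ℂ⟦X⟧)) * E ^ k := by
          refine Finset.sum_congr rfl fun k _ => ?_
          rw [this k, Finset.sum_mul]
      _ = ∑ i ∈ range (m+1), ∑ k ∈ range (m+1),
            ((phi i).coeff k • (A i : ℂ⟦X⟧)) * E ^ k := Finset.sum_comm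
      _ = ∑ i ∈ range (m+1), (A i : ℂ⟦X⟧) * Polynomial.aeval E (phi i) := by
          refine Finset.sum_congr rfl fun i hi => ?_
          rw [Polynomial.aeval_eq_sum_range' (n := m+1)
            (lt_of_le_of_lt (le_of_eq (phi_monic_deg i).2) (mem_range.mp hi)), Finset.mul_sum]
          refine Finset.sum_congr rfl fun k _ => ?_
          rw [smul_mul_assoc, mul_smul_comm]
  have hRm : R m = A m := by
    show ∑ i ∈ range (m+1), (phi i).coeff m • A i = A m
    rw [Finset.sum_eq_single m]
    · have h1 := (phi_monic_deg m).1.coeff_natDegree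
      rw [(phi_monic_deg m).2] at h1
      rw [h1, one_smul]
    · intro i hi hne
      have : (phi i).coeff m = 0 := by
        apply Polynomial.coeff_eq_zero_of_natDegree_lt
        rw [(phi_monic_deg i).2]
        exact lt_of_le_of_ne (Nat.lt_succ_iff.mp (mem_range.mp hi)) hne
      rw [this, zero_smul]
    · intro hm; exact absurd (self_mem_range_succ m) hm
  exact hA (hRm ▸ indep m R hexp m le_rfl)

noncomputable def stepA (m : ℕ) (A : ℕ → Polynomial ℂ) : ℕ → Polynomial ℂ :=
  fun i => (if i ≤ m then derivative (A i) else 0) + (if i = 0 then 0 else A (i-1))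

theorem step (m : ℕ) (A : ℕ → Polynomial ℂ) (P : Polynomial ℂ)
    (h : ∑ i ∈ range (m+1), (A i : ℂ⟦X⟧) * (d⁄dX ℂ)^[i] bF = (P : ℂ⟦X⟧)) :
    ∑ i ∈ range (m+2), (stepA m A i : ℂ⟦X⟧) * (d⁄dX ℂ)^[i] bF
      = ((derivative P : Polynomial ℂ) : ℂ⟦X⟧) := by
  have hD := congrArg (d⁄dX ℂ) h
  rw [map_sum, PowerSeries.derivative_coe] at hD
  have hterm : ∀ i, d⁄dX ℂ ((A i : ℂ⟦X⟧) * (d⁄dX ℂ)^[i] bF)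
      = ((derivative (A i) : Polynomial ℂ) : ℂ⟦X⟧) * (d⁄dX ℂ)^[i] bF
        + (A i : ℂ⟦X⟧) * (d⁄dX ℂ)^[i+1] bF := by
    intro i
    rw [Derivation.leibniz, PowerSeries.derivative_coe, Function.iterate_succ_apply',
      smul_eq_mul, smul_eq_mul]
    ring
  rw [Finset.sum_congr rfl (fun i _ => hterm i), Finset.sum_add_distrib] at hD
  rw [← hD]
  have hsplit : ∀ i, (stepA m A i : ℂ⟦X⟧) * (d⁄dX ℂ)^[i] bF
      = (if i ≤ m then ((derivative (A i) : Polynomial ℂ) : ℂ⟦X⟧) else 0) * (d⁄dX ℂ)^[i] bF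
        + (if i = 0 then 0 else ((A (i-1) : Polynomial ℂ) : ℂ⟦X⟧)) * (d⁄dX ℂ)^[i] bF := by
    intro i
    rw [stepA, Polynomial.coe_add, add_mul]
    congr 2
    · split_ifs <;> simp
    · split_ifs <;> simp
  rw [Finset.sum_congr rfl (fun i _ => hsplit i), Finset.sum_add_distrib]
  congr 1
  · rw [show m + 2 = (m+1) + 1 from rfl, Finset.sum_range_succ,
      if_neg (by omega : ¬ (m+1 ≤ m)), zero_mul, add_zero]
    exact Finset.sum_congr rfl fun i hi => by
      rw [if_pos (Nat.lt_succ_iff.mp (mem_range.mp hi))]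
  · rw [show m + 2 = (m+1) + 1 from rfl, Finset.sum_range_succ']
    simp only [Nat.succ_ne_zero, if_false, Nat.add_sub_cancel, if_pos rfl, zero_mul, add_zero]
    simp

theorem no_inhom : ∀ (N m : ℕ) (A : ℕ → Polynomial ℂ) (P : Polynomial ℂ),
    P.natDegree ≤ N → A m ≠ 0 →
    (∑ i ∈ range (m+1), (A i : ℂ⟦X⟧) * (d⁄dX ℂ)^[i] bF = (P : ℂ⟦X⟧)) → False := by
  intro N
  induction N with
  | zero =>
    intro m A P hdeg hA h
    have hstep := step m A P h
    have hP : derivative P = 0 := by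
      rw [Polynomial.eq_C_of_natDegree_eq_zero (Nat.le_zero.mp hdeg)]; simp
    rw [hP] at hstep
    refine no_ode (m+1) (stepA m A) ?_ (by rw [show m+1+1 = m+2 from rfl, hstep]; simp)
    rw [stepA]
    simp only [if_neg (by omega : ¬ (m+1 ≤ m)), if_neg (Nat.succ_ne_zero m),
      Nat.add_sub_cancel, zero_add]
    exact hA
  | succ N ihN =>
    intro m A P hdeg hA h
    have hstep := step m A P h
    refine ihN (m+1) (stepA m A) (derivative P)
      (le_trans (Polynomial.natDegree_derivative_le P) (by omega)) ?_
      (by rw [show m+1+1 = m+2 from rfl]; exact hstep)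
    rw [stepA]
    simp only [if_neg (by omega : ¬ (m+1 ≤ m)), if_neg (Nat.succ_ne_zero m),
      Nat.add_sub_cancel, zero_add]
    exact hA

noncomputable def fall (e : ℕ) (i : ℕ) : Polynomial ℂ :=
  ∏ t ∈ range i, (Polynomial.X + Polynomial.C ((e:ℂ) - (t:ℂ)))

theorem fall_monic (e i : ℕ) : (fall e i).Monic :=
  Polynomial.monic_prod_of_monic _ _ (fun t _ => Polynomial.monic_X_add_C _)

theorem fall_natDegree (e i : ℕ) : (fall e i).natDegree = i := by
  rw [fall, Polynomial.natDegree_prod_of_monic _ _ (fun t _ => Polynomial.monic_X_add_C _)]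
  simp only [Polynomial.natDegree_X_add_C, Finset.sum_const, smul_eq_mul, mul_one, card_range]

theorem fall_eval (e i : ℕ) (n : ℕ) :
    (fall e i).eval (n:ℂ) = ∏ t ∈ range i, ((n:ℂ) + (e:ℂ) - (t:ℂ)) := by
  rw [fall, Polynomial.eval_prod]
  refine Finset.prod_congr rfl fun t _ => ?_
  simp only [Polynomial.eval_add, Polynomial.eval_X, Polynomial.eval_C]
  ring

theorem fall_repr (e : ℕ) : ∀ (D : ℕ) (q : Polynomial ℂ), q.natDegree ≤ D →
    ∃ c : ℕ → ℂ, q = ∑ i ∈ range (D+1), Polynomial.C (c i) * fall e i := by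
  intro D
  induction D with
  | zero =>
    intro q hq
    refine ⟨fun _ => q.coeff 0, ?_⟩
    rw [Polynomial.eq_C_of_natDegree_le_zero hq]
    simp [fall]
  | succ D ih =>
    intro q hq
    set a := q.coeff (D+1) with ha
    have hdeg : (q - Polynomial.C a * fall e (D+1)).natDegree ≤ D := by
      rw [Polynomial.natDegree_le_iff_coeff_eq_zero]
      intro N hN
      rw [Polynomial.coeff_sub, Polynomial.coeff_C_mul]
      rcases eq_or_lt_of_le (Nat.succ_le_of_lt hN) with h' | h'
      · rw [← h']
        have := (fall_monic e (D+1)).coeff_natDegree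
        rw [fall_natDegree] at this
        rw [this, mul_one, ← ha, sub_self]
      · rw [Polynomial.coeff_eq_zero_of_natDegree_lt (lt_of_le_of_lt hq h'),
          Polynomial.coeff_eq_zero_of_natDegree_lt (by rw [fall_natDegree]; exact h'),
          mul_zero, sub_zero]
    obtain ⟨c', hc'⟩ := ih _ hdeg
    refine ⟨fun i => if i = D+1 then a else c' i, ?_⟩
    rw [Finset.sum_range_succ]
    simp only [if_true]
    have : ∑ i ∈ range (D+1), Polynomial.C (if i = D+1 then a else c' i) * fall e i
        = ∑ i ∈ range (D+1), Polynomial.C (c' i) * fall e i := by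
      refine Finset.sum_congr rfl fun i hi => ?_
      rw [if_neg (by have := mem_range.mp hi; omega)]
    rw [this, ← hc']
    ring

theorem fall_repr_top (e D : ℕ) (q : Polynomial ℂ) (c : ℕ → ℂ)
    (h : q = ∑ i ∈ range (D+1), Polynomial.C (c i) * fall e i) : q.coeff D = c D := by
  rw [h, Polynomial.finset_sum_coeff, Finset.sum_range_succ]
  have h1 : ∀ i ∈ range D, (Polynomial.C (c i) * fall e i).coeff D = 0 := by
    intro i hi
    apply Polynomial.coeff_eq_zero_of_natDegree_lt
    calc (Polynomial.C (c i) * fall e i).natDegree ≤ (fall e i).natDegree := by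
          apply Polynomial.natDegree_le_iff_coeff_eq_zero.mpr
          intro N hN
          rw [Polynomial.coeff_C_mul,
            Polynomial.coeff_eq_zero_of_natDegree_lt (lt_of_le_of_lt (le_refl _) hN), mul_zero]
      _ < D := by rw [fall_natDegree]; exact mem_range.mp hi
  rw [Finset.sum_congr rfl h1, Finset.sum_const_zero, zero_add, Polynomial.coeff_C_mul]
  have := (fall_monic e D).coeff_natDegree
  rw [fall_natDegree] at this
  rw [this, mul_one]


theorem hfac (n : ℕ) : ∀ e : ℕ,
    ((n.factorial : ℂ)) * ∏ t ∈ range e, ((n:ℂ) + (t:ℂ) + 1) = (((n+e).factorial : ℂ)) := by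
  intro e
  induction e with
  | zero => simp
  | succ e ih =>
    rw [Finset.prod_range_succ, ← mul_assoc, ih, show n + (e+1) = (n+e) + 1 from rfl,
      Nat.factorial_succ]
    push_cast
    ring

/-- The sequence of Bell numbers is not holonomic. -/
theorem bell_not_holonomic :
    ¬ HolonomicSeq (fun n : ℕ => (bell n : ℂ)) := by
  rintro ⟨d, p, hp0, hrec⟩
  -- the normalized recurrence for bb
  set q : ℕ → Polynomial ℂ :=
    fun j => p j * ∏ t ∈ range (d-j), (Polynomial.X + Polynomial.C ((t:ℂ)+1)) with hqdef
  have hprodmonic : ∀ j, (∏ t ∈ range (d-j),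
      (Polynomial.X + Polynomial.C ((t:ℂ)+1))).Monic :=
    fun j => Polynomial.monic_prod_of_monic _ _ (fun t _ => Polynomial.monic_X_add_C _)
  have hq0 : q 0 ≠ 0 := mul_ne_zero hp0 (hprodmonic 0).ne_zero
  have hqrec : ∀ n : ℕ, ∑ j ∈ range (d+1), (q j).eval (n:ℂ) * bb (n + (d-j)) = 0 := by
    intro n
    have key : ∀ j ∈ range (d+1), (q j).eval (n:ℂ) * bb (n + (d-j))
        = (p j).eval (n:ℂ) * (bell (n + (d-j)) : ℂ) / (n.factorial : ℂ) := by
      intro j _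
      rw [hqdef]
      simp only [Polynomial.eval_mul, Polynomial.eval_prod, Polynomial.eval_add,
        Polynomial.eval_X, Polynomial.eval_C]
      rw [show bb (n + (d-j)) = ((bell (n + (d-j)) : ℕ) : ℂ) / (((n + (d-j)).factorial : ℕ) : ℂ) from rfl]
      rw [mul_assoc, mul_div_assoc]
      congr 1
      have hp2 : ∏ x ∈ range (d-j), ((n:ℂ) + ((x:ℂ)+1)) = ∏ t ∈ range (d-j), ((n:ℂ)+(t:ℂ)+1) :=
        Finset.prod_congr rfl fun t _ => by ring
      rw [hp2, mul_div_assoc', div_eq_div_iff (fact_ne _) (fact_ne _)]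
      linear_combination ((bell (n + (d-j)) : ℕ) : ℂ) * (hfac n (d-j))
    rw [Finset.sum_congr rfl key, ← Finset.sum_div]
    rw [show ∑ j ∈ range (d+1), (p j).eval (n:ℂ) * (bell (n + (d-j)) : ℂ)
      = ∑ j ∈ range (d+1), (p j).eval (n:ℂ) * ((fun m : ℕ => (bell m : ℂ)) (n + (d-j)))
      from rfl, hrec n, zero_div]
  -- choose the maximal degree
  set s : Finset ℕ := (range (d+1)).filter (fun j => q j ≠ 0) with hs
  have h0s : 0 ∈ s := by
    rw [hs, mem_filter]
    exact ⟨mem_range.mpr (Nat.succ_pos d), hq0⟩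
  obtain ⟨j0, hj0s, hj0max⟩ := Finset.exists_max_image s (fun j => (q j).natDegree) ⟨0, h0s⟩
  set I : ℕ := (q j0).natDegree with hI
  have hj0range : j0 ∈ range (d+1) := (mem_filter.mp hj0s).1
  have hj0ne : q j0 ≠ 0 := (mem_filter.mp hj0s).2
  have hIbound : ∀ j ∈ range (d+1), (q j).natDegree ≤ I := by
    intro j hj
    by_cases hqj : q j = 0
    · rw [hqj]; simp
    · exact hj0max j (mem_filter.mpr ⟨hj, hqj⟩)
  -- falling-factorial representation
  have hrepr : ∀ j : ℕ, ∃ c : ℕ → ℂ, j ∈ range (d+1) →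
      q j = ∑ i ∈ range (I+1), Polynomial.C (c i) * fall (d-j) i := by
    intro j
    by_cases hj : j ∈ range (d+1)
    · obtain ⟨c, hc⟩ := fall_repr (d-j) I (q j) (hIbound j hj)
      exact ⟨c, fun _ => hc⟩
    · exact ⟨fun _ => 0, fun h => absurd h hj⟩
  choose c hc using hrepr
  -- the power series combination
  set G : ℂ⟦X⟧ := ∑ j ∈ range (d+1), ∑ i ∈ range (I+1),
    PowerSeries.C (R := ℂ) (c j i) * (PowerSeries.X ^ (i+j) * (d⁄dX ℂ)^[i] bF) with hG
  have hGcoeff : ∀ N, I + d ≤ N → PowerSeries.coeff (R := ℂ) N G = 0 := by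
    intro N hN
    set n : ℕ := N - d with hn
    have hNn : N = n + d := by omega
    have hnI : I ≤ n := by omega
    rw [hG, map_sum]
    have inner : ∀ j ∈ range (d+1),
        (PowerSeries.coeff (R := ℂ) N) (∑ i ∈ range (I+1),
          PowerSeries.C (R := ℂ) (c j i) * (PowerSeries.X ^ (i+j) * (d⁄dX ℂ)^[i] bF))
        = (q j).eval (n:ℂ) * bb (n + (d-j)) := by
      intro j hj
      have hjd : j ≤ d := Nat.lt_succ_iff.mp (mem_range.mp hj)
      rw [map_sum]
      have term : ∀ i ∈ range (I+1),
          (PowerSeries.coeff (R := ℂ) N) (PowerSeries.C (R := ℂ) (c j i)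
            * (PowerSeries.X ^ (i+j) * (d⁄dX ℂ)^[i] bF))
          = c j i * ((fall (d-j) i).eval (n:ℂ) * bb (n + (d-j))) := by
        intro i hi
        have hiI : i ≤ I := Nat.lt_succ_iff.mp (mem_range.mp hi)
        rw [PowerSeries.coeff_C_mul, PowerSeries.coeff_X_pow_mul',
          if_pos (by omega : i + j ≤ N), coeff_iter]
        congr 1
        have h1 : N - (i+j) + i = n + (d-j) := by omega
        have h2 : ((N - (i+j) : ℕ) : ℂ) = (n:ℂ) + ((d-j : ℕ):ℂ) - (i:ℂ) := by
          have : N - (i+j) + i = n + (d - j) := h1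
          have h3 : ((N - (i+j) + i : ℕ) : ℂ) = ((n + (d-j) : ℕ) : ℂ) := by rw [this]
          push_cast at h3
          linear_combination h3
        rw [h1, fall_eval]
        congr 1
        refine Finset.prod_congr rfl fun t _ => ?_
        rw [h2]
        ring
      rw [Finset.sum_congr rfl term]
      have hfactor : ∑ i ∈ range (I+1), c j i * ((fall (d-j) i).eval (n:ℂ) * bb (n + (d-j)))
          = (∑ i ∈ range (I+1), c j i * (fall (d-j) i).eval (n:ℂ)) * bb (n + (d-j)) := by
        rw [Finset.sum_mul]
        exact Finset.sum_congr rfl fun i _ => by ring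
      rw [hfactor]
      congr 1
      have := congrArg (Polynomial.eval ((n:ℕ):ℂ)) (hc j hj)
      rw [Polynomial.eval_finset_sum] at this
      rw [this]
      exact Finset.sum_congr rfl fun i _ => by
        rw [Polynomial.eval_mul, Polynomial.eval_C]
    rw [Finset.sum_congr rfl inner]
    exact hqrec n
  -- G is a polynomial
  set P : Polynomial ℂ := PowerSeries.trunc (I+d) G with hP
  have hGP : G = (P : ℂ⟦X⟧) := by
    ext N
    rw [Polynomial.coeff_coe, hP, PowerSeries.coeff_trunc]
    split_ifs with h
    · rfl
    · exact hGcoeff N (by omega)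
  -- rearrange G
  set A : ℕ → Polynomial ℂ :=
    fun i => ∑ j ∈ range (d+1), Polynomial.C (c j i) * Polynomial.X ^ (i+j) with hA
  have hGA : G = ∑ i ∈ range (I+1), (A i : ℂ⟦X⟧) * (d⁄dX ℂ)^[i] bF := by
    rw [hG, Finset.sum_comm]
    refine Finset.sum_congr rfl fun i _ => ?_
    have : ((A i : Polynomial ℂ) : ℂ⟦X⟧)
        = ∑ j ∈ range (d+1), PowerSeries.C (R := ℂ) (c j i) * PowerSeries.X ^ (i+j) := by
      rw [hA]
      rw [show ((∑ j ∈ range (d+1), Polynomial.C (c j i) * Polynomial.X ^ (i+j)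
          : Polynomial ℂ) : ℂ⟦X⟧)
        = Polynomial.coeToPowerSeries.ringHom
            (∑ j ∈ range (d+1), Polynomial.C (c j i) * Polynomial.X ^ (i+j)) from rfl,
        map_sum]
      refine Finset.sum_congr rfl fun j _ => ?_
      rw [map_mul, map_pow]
      rw [Polynomial.coeToPowerSeries.ringHom_apply, Polynomial.coeToPowerSeries.ringHom_apply,
        Polynomial.coe_C, Polynomial.coe_X]
    rw [this, Finset.sum_mul]
    exact Finset.sum_congr rfl fun j _ => by rw [mul_assoc]
  -- A I ≠ 0
  have hAI : A I ≠ 0 := by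
    intro hzero
    have hcoeff : (A I).coeff (I + j0) = c j0 I := by
      rw [hA]
      rw [Polynomial.finset_sum_coeff]
      rw [Finset.sum_eq_single j0]
      · rw [Polynomial.coeff_C_mul, Polynomial.coeff_X_pow, if_pos rfl, mul_one]
      · intro j hj hne
        rw [Polynomial.coeff_C_mul, Polynomial.coeff_X_pow, if_neg (by omega), mul_zero]
      · intro h; exact absurd hj0range h
    have hcI : c j0 I = (q j0).coeff I := (fall_repr_top (d-j0) I (q j0) (c j0)
      (hc j0 hj0range)).symm
    rw [hzero, Polynomial.coeff_zero] at hcoeff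
    rw [← hcoeff] at hcI
    exact hj0ne (Polynomial.leadingCoeff_eq_zero.mp (by rw [Polynomial.leadingCoeff, ← hI, ← hcI]))
  exact no_inhom P.natDegree I A P le_rfl hAI (by rw [← hGA, hGP])
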